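/- arXiv:math/0011142 — 3 statements merged into one kernel-verified Lean document; each statement's English description precedes it below -/
import Mathlib

section
/- Let n ∈ ℕ, let r be a reflexive transitive relation on Fin n, and let A(r) ⊆ Matrix (Fin n) (Fin n) ℂ be the associated digraph algebra. Let ~ be the equivalence relation i ~ j ↔ (r i j ∧ r j i), and for each equivalence class C of ~ let E_C be the diagonal matrix with (E_C) i i = 1 if i ∈ C and 0 otherwise (these are the minimal central projections of A(r) ∩ A(r)*). Suppose P_1, …, P_s and Q_1, …, Q_s are diagonal matrices all of whose diagonal entries are 0 or 1 (standard projections in A(r)), with P_j · P_k = 0 and Q_j · Q_k = 0 whenever j ≠ k. If rank(E_C · P_j · E_C) = rank(E_C · Q_j · E_C) for every equivalence class C and every j = 1, …, s, then there exists a permutation σ of Fin n with σ i ~ i for every i, such that its permutation matrix U (a unitary lying in A(r) ∩ A(r)*) satisfies Uᴴ · P_j · U = Q_j for every j = 1, …, s. -/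
open Matrix

noncomputable section

/-- The digraph algebra `A(r)`: matrices supported on the relation `r`. -/
def digraphAlg (n : ℕ) (r : Fin n → Fin n → Prop) : Set (Matrix (Fin n) (Fin n) ℂ) :=
  {M | ∀ i j, ¬ r i j → M i j = 0}

/-- `C*(A(r))`: the *-subalgebra of `Mₙ(ℂ)` generated by `A(r)`. -/
def cstarAlg (n : ℕ) (r : Fin n → Fin n → Prop) : Set (Matrix (Fin n) (Fin n) ℂ) :=
  (StarAlgebra.adjoin ℂ (digraphAlg n r) : StarSubalgebra ℂ (Matrix (Fin n) (Fin n) ℂ))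

/-- A star-extendible homomorphism `A(r₁) → A(r₂)`, as (the extension to `C*(A(r₁))` of) a
function which is a ⋆-algebra homomorphism on `C*(A(r₁))` and maps `A(r₁)` into `A(r₂)`. -/
def IsStarExtHom (n m : ℕ) (r₁ : Fin n → Fin n → Prop) (r₂ : Fin m → Fin m → Prop)
    (Φ : Matrix (Fin n) (Fin n) ℂ → Matrix (Fin m) (Fin m) ℂ) : Prop :=
  (∀ x ∈ cstarAlg n r₁, ∀ y ∈ cstarAlg n r₁, Φ (x + y) = Φ x + Φ y) ∧
  (∀ (c : ℂ), ∀ x ∈ cstarAlg n r₁, Φ (c • x) = c • Φ x) ∧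
  (∀ x ∈ cstarAlg n r₁, ∀ y ∈ cstarAlg n r₁, Φ (x * y) = Φ x * Φ y) ∧
  (∀ x ∈ cstarAlg n r₁, Φ xᴴ = (Φ x)ᴴ) ∧
  (∀ a ∈ digraphAlg n r₁, Φ a ∈ digraphAlg m r₂)

/-- `Φ` has multiplicity one: every diagonal matrix unit is sent to a matrix of rank ≤ 1. -/
def MultOne (n m : ℕ) (Φ : Matrix (Fin n) (Fin n) ℂ → Matrix (Fin m) (Fin m) ℂ) : Prop :=
  ∀ i : Fin n, (Φ (Matrix.single i i (1 : ℂ))).rank ≤ 1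

/-- `Φ` is regular (1-decomposable): a finite direct sum of multiplicity one star-extendible
homomorphisms with mutually orthogonal ranges. -/
def IsRegularHom (n m : ℕ) (r₁ : Fin n → Fin n → Prop) (r₂ : Fin m → Fin m → Prop)
    (Φ : Matrix (Fin n) (Fin n) ℂ → Matrix (Fin m) (Fin m) ℂ) : Prop :=
  IsStarExtHom n m r₁ r₂ Φ ∧
  ∃ (d : ℕ) (Ψ : Fin d → Matrix (Fin n) (Fin n) ℂ → Matrix (Fin m) (Fin m) ℂ),
    (∀ t, IsStarExtHom n m r₁ r₂ (Ψ t) ∧ MultOne n m (Ψ t)) ∧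
    (∀ s t, s ≠ t → Ψ s 1 * Ψ t 1 = 0) ∧
    (∀ x ∈ cstarAlg n r₁, Φ x = ∑ t, Ψ t x)

/-- The partial isometry normaliser `N_{Dₘ}(A(r))` of the diagonal masa in `A(r)`. -/
def diagNormaliser (m : ℕ) (r : Fin m → Fin m → Prop) : Set (Matrix (Fin m) (Fin m) ℂ) :=
  {v | v ∈ digraphAlg m r ∧ v * vᴴ * v = v ∧
    ∀ d : Matrix (Fin m) (Fin m) ℂ, d.IsDiag → (vᴴ * d * v).IsDiag ∧ (v * d * vᴴ).IsDiag}

/-- `Φ` is standard regular: regular and mapping the diagonal normaliser into the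
diagonal normaliser. -/
def IsStandardRegularHom (n m : ℕ) (r₁ : Fin n → Fin n → Prop) (r₂ : Fin m → Fin m → Prop)
    (Φ : Matrix (Fin n) (Fin n) ℂ → Matrix (Fin m) (Fin m) ℂ) : Prop :=
  IsRegularHom n m r₁ r₂ Φ ∧ ∀ v ∈ diagNormaliser n r₁, Φ v ∈ diagNormaliser m r₂

/-- A unitary element of the digraph algebra `A(r)`. -/
def IsUnitaryIn (m : ℕ) (r : Fin m → Fin m → Prop) (U : Matrix (Fin m) (Fin m) ℂ) : Prop :=
  U ∈ digraphAlg m r ∧ Uᴴ * U = 1 ∧ U * Uᴴ = 1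

/-- The L²→L² operator norm of a matrix. -/
def l2OpNorm {k : ℕ} (a : Matrix (Fin k) (Fin k) ℂ) : ℝ :=
  ‖Matrix.toEuclideanCLM (𝕜 := ℂ) a‖

open scoped Classical

/-- If two families of pairwise orthogonal standard (diagonal 0–1) projections
in a digraph algebra `A(r)` have matching ranks against each minimal central projection `E_C`
of `A(r) ∩ A(r)*` (the classes `C` of the equivalence relation `i ~ j ↔ r i j ∧ r j i`),
then they are conjugate by a standard permutation unitary of `A(r) ∩ A(r)*` whose permutation
`σ` satisfies `σ i ~ i` for all `i`. -/
theorem digraphAlg_standard_proj_conjugacy (n s : ℕ) (r : Fin n → Fin n → Prop)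
    (hrefl : Reflexive r) (htrans : Transitive r)
    (P Q : Fin s → Matrix (Fin n) (Fin n) ℂ)
    (hPdiag : ∀ j, (P j).IsDiag) (hQdiag : ∀ j, (Q j).IsDiag)
    (hP01 : ∀ j i, P j i i = 0 ∨ P j i i = 1)
    (hQ01 : ∀ j i, Q j i i = 0 ∨ Q j i i = 1)
    (hPorth : ∀ j k, j ≠ k → P j * P k = 0)
    (hQorth : ∀ j k, j ≠ k → Q j * Q k = 0)
    (E : Fin n → Matrix (Fin n) (Fin n) ℂ)
    (hE : ∀ i, E i = Matrix.diagonal (fun k => if r i k ∧ r k i then (1 : ℂ) else 0))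
    (hrank : ∀ (i : Fin n) (j : Fin s), (E i * P j * E i).rank = (E i * Q j * E i).rank) :
    ∃ σ : Equiv.Perm (Fin n),
      (∀ i, r (σ i) i ∧ r i (σ i)) ∧
      ∃ U : Matrix (Fin n) (Fin n) ℂ,
        U = Matrix.of (fun i j => if i = σ j then (1 : ℂ) else 0) ∧
        U ∈ digraphAlg n r ∧ Uᴴ ∈ digraphAlg n r ∧ Uᴴ * U = 1 ∧ U * Uᴴ = 1 ∧
        ∀ j, Uᴴ * P j * U = Q j := by
  classical
  -- uniqueness of labels
  have hmul : ∀ (R : Fin s → Matrix (Fin n) (Fin n) ℂ), (∀ j, (R j).IsDiag) →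
      ∀ j k i, (R j * R k) i i = R j i i * R k i i := by
    intro R hdiag j k i
    rw [Matrix.mul_apply, Finset.sum_eq_single i]
    · intro b _ hb
      rw [hdiag j (Ne.symm hb), zero_mul]
    · intro h; exact absurd (Finset.mem_univ i) h
  have hPuniq : ∀ i j k, P j i i = 1 → P k i i = 1 → j = k := by
    intro i j k hj hk
    by_contra hjk
    have h0 := congrFun (congrFun (hPorth j k hjk) i) i
    rw [hmul P hPdiag j k i, hj, hk] at h0
    simpa using h0
  have hQuniq : ∀ i j k, Q j i i = 1 → Q k i i = 1 → j = k := by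
    intro i j k hj hk
    by_contra hjk
    have h0 := congrFun (congrFun (hQorth j k hjk) i) i
    rw [hmul Q hQdiag j k i, hj, hk] at h0
    simpa using h0
  -- label functions
  set fP : Fin n → Option (Fin s) :=
    fun i => if h : ∃ j, P j i i = 1 then some h.choose else none with hfP
  set fQ : Fin n → Option (Fin s) :=
    fun i => if h : ∃ j, Q j i i = 1 then some h.choose else none with hfQ
  have hfP_some : ∀ i j, fP i = some j ↔ P j i i = 1 := by
    intro i j
    constructor
    · intro h
      by_cases hex : ∃ k, P k i i = 1
      · have hchoose : fP i = some hex.choose := by rw [hfP]; simp [hex]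
        rw [hchoose] at h
        injection h with h
        exact h ▸ hex.choose_spec
      · rw [hfP] at h; simp [hex] at h
    · intro h
      have hex : ∃ k, P k i i = 1 := ⟨j, h⟩
      rw [hfP]; simp only [hex, dif_pos, Option.some.injEq]
      exact hPuniq i hex.choose j hex.choose_spec h
  have hfQ_some : ∀ i j, fQ i = some j ↔ Q j i i = 1 := by
    intro i j
    constructor
    · intro h
      by_cases hex : ∃ k, Q k i i = 1
      · have hchoose : fQ i = some hex.choose := by rw [hfQ]; simp [hex]
        rw [hchoose] at h
        injection h with h
        exact h ▸ hex.choose_spec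
      · rw [hfQ] at h; simp [hex] at h
    · intro h
      have hex : ∃ k, Q k i i = 1 := ⟨j, h⟩
      rw [hfQ]; simp only [hex, dif_pos, Option.some.injEq]
      exact hQuniq i hex.choose j hex.choose_spec h
  have hfP_none : ∀ i, fP i = none → ∀ j, P j i i = 0 := by
    intro i h j
    rcases hP01 j i with h0 | h1
    · exact h0
    · exfalso; rw [hfP] at h; have hex : ∃ k, P k i i = 1 := ⟨j, h1⟩
      simp [hex] at h
  have hfQ_none : ∀ i, fQ i = none → ∀ j, Q j i i = 0 := by
    intro i h j
    rcases hQ01 j i with h0 | h1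
    · exact h0
    · exfalso; rw [hfQ] at h; have hex : ∃ k, Q k i i = 1 := ⟨j, h1⟩
      simp [hex] at h
  -- class function
  set cf : Fin n → (Fin n → Prop) := fun i k => r i k ∧ r k i with hcfdef
  have hcf : ∀ i k, cf i = cf k ↔ (r i k ∧ r k i) := by
    intro i k
    constructor
    · intro h
      have h1 : (r i k ∧ r k i) = (r k k ∧ r k k) := congrFun h k
      exact h1.symm ▸ ⟨hrefl k, hrefl k⟩
    · intro ⟨hik, hki⟩
      funext l
      apply propext
      constructor
      · intro ⟨h1, h2⟩; exact ⟨htrans hki h1, htrans h2 hik⟩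
      · intro ⟨h1, h2⟩; exact ⟨htrans hik h1, htrans h2 hki⟩
  -- rank of compressed projections
  have hrankP : ∀ (x : Fin n) (j : Fin s),
      (E x * P j * E x).rank = Fintype.card {k // (r x k ∧ r k x) ∧ P j k k = 1} := by
    intro x j
    have hPj : P j = Matrix.diagonal ((P j).diag) := ((hPdiag j).diagonal_diag).symm
    rw [hE, hPj, Matrix.diagonal_mul_diagonal, Matrix.diagonal_mul_diagonal,
      Matrix.rank_diagonal]
    apply Fintype.card_congr
    apply Equiv.subtypeEquivRight
    intro k
    by_cases hc : r x k ∧ r k x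
    · simp only [hc, if_pos, Matrix.diag_apply, one_mul, mul_one, true_and]
      rcases hP01 j k with h0 | h1
      · simp [h0]
      · simp [h1]
    · simp [hc]
  have hrankQ : ∀ (x : Fin n) (j : Fin s),
      (E x * Q j * E x).rank = Fintype.card {k // (r x k ∧ r k x) ∧ Q j k k = 1} := by
    intro x j
    have hQj : Q j = Matrix.diagonal ((Q j).diag) := ((hQdiag j).diagonal_diag).symm
    rw [hE, hQj, Matrix.diagonal_mul_diagonal, Matrix.diagonal_mul_diagonal,
      Matrix.rank_diagonal]
    apply Fintype.card_congr
    apply Equiv.subtypeEquivRight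
    intro k
    by_cases hc : r x k ∧ r k x
    · simp only [hc, if_pos, Matrix.diag_apply, one_mul, mul_one, true_and]
      rcases hQ01 j k with h0 | h1
      · simp [h0]
      · simp [h1]
    · simp [hc]
  -- counts per class and label
  set NP : (Fin n → Prop) → Option (Fin s) → ℕ :=
    fun C v => (Finset.univ.filter (fun a => cf a = C ∧ fP a = v)).card with hNP
  set NQ : (Fin n → Prop) → Option (Fin s) → ℕ :=
    fun C v => (Finset.univ.filter (fun a => cf a = C ∧ fQ a = v)).card with hNQ
  have hsumP : ∀ C, ∑ v : Option (Fin s), NP C v = (Finset.univ.filter (fun a => cf a = C)).card := by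
    intro C
    rw [Finset.card_eq_sum_card_fiberwise (f := fP) (t := Finset.univ) (fun x _ => Finset.mem_univ _)]
    apply Finset.sum_congr rfl
    intro v _
    rw [hNP, Finset.filter_filter]
  have hsumQ : ∀ C, ∑ v : Option (Fin s), NQ C v = (Finset.univ.filter (fun a => cf a = C)).card := by
    intro C
    rw [Finset.card_eq_sum_card_fiberwise (f := fQ) (t := Finset.univ) (fun x _ => Finset.mem_univ _)]
    apply Finset.sum_congr rfl
    intro v _
    rw [hNQ, Finset.filter_filter]
  have hsome : ∀ (x : Fin n) (j : Fin s), NP (cf x) (some j) = NQ (cf x) (some j) := by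
    intro x j
    have h1 : NP (cf x) (some j) = Fintype.card {k // (r x k ∧ r k x) ∧ P j k k = 1} := by
      rw [hNP, Fintype.card_subtype]
      beta_reduce
      congr 1
      apply Finset.filter_congr
      intro k _
      rw [hcf, hfP_some]
      constructor
      · intro ⟨h1, h2⟩; exact ⟨⟨h1.2, h1.1⟩, h2⟩
      · intro ⟨h1, h2⟩; exact ⟨⟨h1.2, h1.1⟩, h2⟩
    have h2 : NQ (cf x) (some j) = Fintype.card {k // (r x k ∧ r k x) ∧ Q j k k = 1} := by
      rw [hNQ, Fintype.card_subtype]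
      beta_reduce
      congr 1
      apply Finset.filter_congr
      intro k _
      rw [hcf, hfQ_some]
      constructor
      · intro ⟨h1, h2⟩; exact ⟨⟨h1.2, h1.1⟩, h2⟩
      · intro ⟨h1, h2⟩; exact ⟨⟨h1.2, h1.1⟩, h2⟩
    rw [h1, h2, ← hrankP, ← hrankQ, hrank]
  have hcount : ∀ c : (Fin n → Prop) × Option (Fin s),
      Fintype.card {a // (cf a, fQ a) = c} = Fintype.card {b // (cf b, fP b) = c} := by
    rintro ⟨C, v⟩
    have hQc : Fintype.card {a // (cf a, fQ a) = (C, v)} = NQ C v := by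
      rw [Fintype.card_subtype, hNQ]
      beta_reduce
      congr 1
      apply Finset.filter_congr
      intro k _
      simp [Prod.ext_iff]
    have hPc : Fintype.card {b // (cf b, fP b) = (C, v)} = NP C v := by
      rw [Fintype.card_subtype, hNP]
      beta_reduce
      congr 1
      apply Finset.filter_congr
      intro k _
      simp [Prod.ext_iff]
    rw [hQc, hPc]
    by_cases hex : ∃ x, cf x = C
    · obtain ⟨x, rfl⟩ := hex
      cases v with
      | some j => exact (hsome x j).symm
      | none =>
        have hP := hsumP (cf x)
        have hQ := hsumQ (cf x)
        rw [Fintype.sum_option] at hP hQ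
        have hss : ∑ j : Fin s, NP (cf x) (some j) = ∑ j : Fin s, NQ (cf x) (some j) :=
          Finset.sum_congr rfl (fun j _ => hsome x j)
        omega
    · push_neg at hex
      have e1 : NQ C v = 0 := by
        rw [hNQ, Finset.card_eq_zero, Finset.filter_eq_empty_iff]
        intro a _ h
        exact hex a h.1
      have e2 : NP C v = 0 := by
        rw [hNP, Finset.card_eq_zero, Finset.filter_eq_empty_iff]
        intro a _ h
        exact hex a h.1
      rw [e1, e2]
  -- the permutation
  set σ : Equiv.Perm (Fin n) :=
    Equiv.ofFiberEquiv (f := fun a => (cf a, fQ a)) (g := fun b => (cf b, fP b))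
      (fun c => Fintype.equivOfCardEq (hcount c)) with hσdef
  have hσprop : ∀ a, (cf (σ a), fP (σ a)) = (cf a, fQ a) := fun a =>
    Equiv.ofFiberEquiv_map (f := fun a => (cf a, fQ a)) (g := fun b => (cf b, fP b))
      (fun c => Fintype.equivOfCardEq (hcount c)) a
  have hclass : ∀ a, r (σ a) a ∧ r a (σ a) := by
    intro a
    have := (Prod.ext_iff.mp (hσprop a)).1
    exact (hcf (σ a) a).mp this
  have hlabel : ∀ a, fP (σ a) = fQ a := fun a => (Prod.ext_iff.mp (hσprop a)).2
  -- pointwise matching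
  have hkey : ∀ j a, P j (σ a) (σ a) = Q j a a := by
    intro j a
    cases hv : fQ a with
    | none =>
      rw [hfQ_none a hv j, hfP_none (σ a) (hlabel a ▸ hv) j]
    | some k =>
      have hPk : P k (σ a) (σ a) = 1 := (hfP_some (σ a) k).mp (hlabel a ▸ hv)
      have hQk : Q k a a = 1 := (hfQ_some a k).mp hv
      by_cases hjk : j = k
      · subst hjk; rw [hPk, hQk]
      · have hP0 : P j (σ a) (σ a) = 0 := by
          rcases hP01 j (σ a) with h0 | h1
          · exact h0
          · exact absurd (hPuniq (σ a) j k h1 hPk) hjk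
        have hQ0 : Q j a a = 0 := by
          rcases hQ01 j a with h0 | h1
          · exact h0
          · exact absurd (hQuniq a j k h1 hQk) hjk
        rw [hP0, hQ0]
  refine ⟨σ, hclass, Matrix.of (fun i j => if i = σ j then (1 : ℂ) else 0), rfl, ?_, ?_, ?_, ?_, ?_⟩
  case _ =>
    intro i j hij
    simp only [Matrix.of_apply]
    rw [if_neg]
    intro h
    exact hij (h ▸ (hclass j).1)
  case _ =>
    intro i j hij
    simp only [Matrix.conjTranspose_apply, Matrix.of_apply]
    rw [if_neg, star_zero]
    intro h
    exact hij (h ▸ (hclass i).2)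
  case _ =>
    ext a b
    simp only [Matrix.mul_apply, Matrix.conjTranspose_apply, Matrix.of_apply, Matrix.one_apply]
    simp only [apply_ite (star : ℂ → ℂ), star_one, star_zero, ite_mul, one_mul, zero_mul]
    rw [Finset.sum_eq_single (σ a)]
    · simp [Equiv.injective σ |>.eq_iff, eq_comm]
    · intro c _ hc
      rw [if_neg hc]
    · intro h; exact absurd (Finset.mem_univ _) h
  case _ =>
    rw [mul_eq_one_comm]
    ext a b
    simp only [Matrix.mul_apply, Matrix.conjTranspose_apply, Matrix.of_apply, Matrix.one_apply]
    simp only [apply_ite (star : ℂ → ℂ), star_one, star_zero, ite_mul, one_mul, zero_mul]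
    rw [Finset.sum_eq_single (σ a)]
    · simp [Equiv.injective σ |>.eq_iff, eq_comm]
    · intro c _ hc
      rw [if_neg hc]
    · intro h; exact absurd (Finset.mem_univ _) h
  case _ =>
    intro j
    have hMU : ∀ (M : Matrix (Fin n) (Fin n) ℂ) a b,
        (M * Matrix.of (fun i j => if i = σ j then (1 : ℂ) else 0)) a b = M a (σ b) := by
      intro M a b
      rw [Matrix.mul_apply, Finset.sum_eq_single (σ b)]
      · simp
      · intro c _ hc
        simp only [Matrix.of_apply]
        rw [if_neg hc, mul_zero]
      · intro h; exact absurd (Finset.mem_univ _) h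
    have hUM : ∀ (M : Matrix (Fin n) (Fin n) ℂ) a b,
        ((Matrix.of (fun i j => if i = σ j then (1 : ℂ) else 0))ᴴ * M) a b = M (σ a) b := by
      intro M a b
      rw [Matrix.mul_apply, Finset.sum_eq_single (σ a)]
      · simp
      · intro c _ hc
        simp only [Matrix.conjTranspose_apply, Matrix.of_apply]
        rw [if_neg hc, star_zero, zero_mul]
      · intro h; exact absurd (Finset.mem_univ _) h
    ext a b
    rw [hMU, hUM]
    by_cases hab : a = b
    · subst hab; exact hkey j a
    · rw [hPdiag j (fun h => hab (Equiv.injective σ h)), hQdiag j hab]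

end
end

section
/- Let r₁ be a reflexive transitive relation on Fin n and let φ, ψ : A(r₁) → A(r₂) ⊆ Matrix (Fin m) (Fin m) ℂ be multiplicity-one star-extendible homomorphisms with *-extensions Φ, Ψ : C*(A(r₁)) → Matrix (Fin m) (Fin m) ℂ. Suppose that Φ(e_ii) = Ψ(e_ii) for every i ∈ Fin n, where e_ii = stdBasisMatrix i i 1, and that each Φ(e_ii) is a diagonal matrix. Then there exists a diagonal unitary V ∈ Matrix (Fin m) (Fin m) ℂ such that Ψ(x) = Vᴴ · Φ(x) · V for all x ∈ C*(A(r₁)). -/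
open Matrix

noncomputable section

lemma sandwich' {N : ℕ} (i j : Fin N) (x : Matrix (Fin N) (Fin N) ℂ) :
    Matrix.single i i 1 * x * Matrix.single j j 1 = x i j • Matrix.single i j 1 := by
  ext a b
  by_cases ha : a = i <;> by_cases hb : b = j <;>
    simp +decide [ha, hb, Matrix.single, mul_apply, Finset.sum_ite_eq, Finset.sum_ite_eq',
      ite_and, eq_comm (a := i), eq_comm (a := j)]

lemma stdct' {N : ℕ} (i j : Fin N) (c : ℂ) :
    (Matrix.single i j c)ᴴ = Matrix.single j i (star c) := by
  ext a b
  simp only [Matrix.single, conjTranspose_apply, of_apply]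
  split_ifs with h h' h' <;> simp_all [and_comm]

lemma onesum' {N : ℕ} : (1 : Matrix (Fin N) (Fin N) ℂ) = ∑ i, Matrix.single i i 1 := by
  ext a b
  simp only [Matrix.single, one_apply, Matrix.sum_apply, of_apply, ite_and]
  rw [Finset.sum_ite_eq' (Finset.univ) a (fun x => if x = b then (1:ℂ) else 0)]
  simp

lemma habs' (c : ℂ) (h : c * star c = 1) : ‖c‖ = 1 := by
  rw [Complex.star_def, Complex.mul_conj] at h
  have h2 : Complex.normSq c = 1 := by exact_mod_cast h
  rw [Complex.norm_def, h2, Real.sqrt_one]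

/-- Two multiplicity-one star-extendible homomorphisms which agree on the
diagonal matrix units (with diagonal values there) are conjugate by a diagonal unitary. -/
theorem multiplicityOne_agree_on_diagonal_conjugate (n m : ℕ)
    (r₁ : Fin n → Fin n → Prop) (r₂ : Fin m → Fin m → Prop)
    (h₁refl : Reflexive r₁) (h₁trans : Transitive r₁)
    (h₂refl : Reflexive r₂) (h₂trans : Transitive r₂)
    (Φ Ψ : Matrix (Fin n) (Fin n) ℂ → Matrix (Fin m) (Fin m) ℂ)
    (hΦ : IsStarExtHom n m r₁ r₂ Φ) (hΦmult : MultOne n m Φ)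
    (hΨ : IsStarExtHom n m r₁ r₂ Ψ) (hΨmult : MultOne n m Ψ)
    (heq : ∀ i : Fin n, Φ (Matrix.single i i (1 : ℂ)) = Ψ (Matrix.single i i (1 : ℂ)))
    (hdiag : ∀ i : Fin n, (Φ (Matrix.single i i (1 : ℂ))).IsDiag) :
    ∃ V : Matrix (Fin m) (Fin m) ℂ, V.IsDiag ∧ (∀ i, ‖V i i‖ = 1) ∧
      ∀ x ∈ cstarAlg n r₁, Ψ x = Vᴴ * Φ x * V := by
  classical
  obtain ⟨hΦadd, hΦsmul, hΦmul, hΦstar, hΦmap⟩ := hΦ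
  obtain ⟨hΨadd, hΨsmul, hΨmul, hΨstar, hΨmap⟩ := hΨ
  set E : Fin n → Matrix (Fin n) (Fin n) ℂ := fun i => Matrix.single i i 1 with hE
  set F : Fin m → Matrix (Fin m) (Fin m) ℂ := fun k => Matrix.single k k 1 with hF
  -- membership facts
  have hEd : ∀ i, E i ∈ digraphAlg n r₁ := by
    intro i a b hab
    by_cases h : i = a ∧ i = b
    · obtain ⟨rfl, h2⟩ := h; exact absurd (h2 ▸ h₁refl i) hab
    · simp only [hE, Matrix.single, of_apply, if_neg h]
  have hEC : ∀ i, E i ∈ cstarAlg n r₁ := fun i => StarAlgebra.subset_adjoin ℂ _ (hEd i)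
  have hCmul : ∀ {x y : Matrix (Fin n) (Fin n) ℂ},
      x ∈ cstarAlg n r₁ → y ∈ cstarAlg n r₁ → x * y ∈ cstarAlg n r₁ := fun hx hy => mul_mem hx hy
  have hCstar : ∀ {x : Matrix (Fin n) (Fin n) ℂ}, x ∈ cstarAlg n r₁ → xᴴ ∈ cstarAlg n r₁ := by
    intro x hx; rw [← Matrix.star_eq_conjTranspose]; exact star_mem hx
  have hC1 : (1 : Matrix (Fin n) (Fin n) ℂ) ∈ cstarAlg n r₁ := one_mem _
  -- the images Ψ(E i) agree with Φ(E i)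
  have hΨE : ∀ i, Ψ (E i) = Φ (E i) := fun i => (heq i).symm
  -- structure of P i = Φ (E i)
  have hPstruct : ∀ i, Φ (E i) = 0 ∨ ∃ k, Φ (E i) = F k := by
    intro i
    have hd := hdiag i
    have hidem : Φ (E i) * Φ (E i) = Φ (E i) := by
      rw [← hΦmul _ (hEC i) _ (hEC i)]
      congr 1
      simp [hE]
    have hent : ∀ t, Φ (E i) t t = 0 ∨ Φ (E i) t t = 1 := by
      intro t
      have h1 : Φ (E i) t t * Φ (E i) t t = Φ (E i) t t := by
        conv_rhs => rw [← hidem]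
        rw [mul_apply, Finset.sum_eq_single t]
        · intro s _ hs; rw [hd (Ne.symm hs), zero_mul]
        · intro h; exact absurd (Finset.mem_univ t) h
      have h2 : Φ (E i) t t * (Φ (E i) t t - 1) = 0 := by ring_nf; linear_combination h1
      rcases mul_eq_zero.mp h2 with h | h
      · exact Or.inl h
      · exact Or.inr (sub_eq_zero.mp h)
    have huniq : ∀ t s, Φ (E i) t t ≠ 0 → Φ (E i) s s ≠ 0 → t = s := by
      intro t s ht hs
      by_contra hts
      have hr := hΦmult i
      rw [← hd.diagonal_diag, rank_diagonal] at hr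
      have : Nontrivial {a // Matrix.diag (Φ (Matrix.single i i (1:ℂ))) a ≠ 0} :=
        ⟨⟨t, ht⟩, ⟨s, hs⟩, by simp [hts]⟩
      have h2 := Fintype.one_lt_card (α := {a // Matrix.diag (Φ (Matrix.single i i (1:ℂ))) a ≠ 0})
      omega
    by_cases hz : ∀ t, Φ (E i) t t = 0
    · left
      ext a b
      by_cases hab : a = b
      · subst hab; simpa using hz a
      · simpa using hd hab
    · right
      push_neg at hz
      obtain ⟨t, ht⟩ := hz
      refine ⟨t, ?_⟩
      ext a b
      by_cases hab : a = b
      · subst hab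
        by_cases hat : a = t
        · subst hat
          rcases hent a with h | h
          · exact absurd h ht
          · simpa [hF, Matrix.single] using h
        · have : Φ (E i) a a = 0 := by
            by_contra h; exact hat (huniq a t h ht)
          rw [this, hF]
          simp only [Matrix.single, of_apply, ite_and]
          rw [if_neg (fun h => hat h.symm)]
      · rw [hd hab, hF]
        simp only [Matrix.single, of_apply]
        rw [if_neg (fun h : t = a ∧ t = b => hab (h.1.symm.trans h.2))]
  -- Φ 1 = Ψ 1 = ∑ P i
  have sumE : ∀ (Θ : Matrix (Fin n) (Fin n) ℂ → Matrix (Fin m) (Fin m) ℂ),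
      (∀ x ∈ cstarAlg n r₁, ∀ y ∈ cstarAlg n r₁, Θ (x + y) = Θ x + Θ y) →
      (∀ (c : ℂ), ∀ x ∈ cstarAlg n r₁, Θ (c • x) = c • Θ x) →
      ∀ (s : Finset (Fin n)), Θ (∑ i ∈ s, E i) = ∑ i ∈ s, Θ (E i) := by
    intro Θ hadd hsmul s
    have h0 : Θ 0 = 0 := by
      have h := hsmul 0 0 (zero_mem _)
      simpa using h
    induction s using Finset.induction with
    | empty => simpa using h0
    | insert _ _ h ih =>
      rw [Finset.sum_insert h, Finset.sum_insert h,
        hadd _ (hEC _) _ (sum_mem fun i _ => hEC i), ih]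
  have hΦ1 : Φ 1 = ∑ i, Φ (E i) := by
    rw [onesum']; exact sumE Φ hΦadd hΦsmul Finset.univ
  have hΨ1 : Ψ 1 = ∑ i, Φ (E i) := by
    rw [onesum', sumE Ψ hΨadd hΨsmul Finset.univ]
    exact Finset.sum_congr rfl fun i _ => hΨE i
  -- row/column vanishing
  have hrow : ∀ k l, (∀ i, Φ (E i) k k = 0) → ∀ x ∈ cstarAlg n r₁,
      Φ x k l = 0 ∧ Ψ x k l = 0 := by
    intro k l hk x hx
    have h1 : ∀ t, (∑ i, Φ (E i)) k t = 0 := by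
      intro t
      rw [Matrix.sum_apply]
      refine Finset.sum_eq_zero fun i _ => ?_
      by_cases h : k = t
      · subst h; exact hk i
      · exact hdiag i h
    constructor
    · rw [show x = 1 * x from (one_mul x).symm, hΦmul 1 hC1 x hx, hΦ1, mul_apply]
      exact Finset.sum_eq_zero fun t _ => by rw [h1 t, zero_mul]
    · rw [show x = 1 * x from (one_mul x).symm, hΨmul 1 hC1 x hx, hΨ1, mul_apply]
      exact Finset.sum_eq_zero fun t _ => by rw [h1 t, zero_mul]
  have hcol : ∀ k l, (∀ j, Φ (E j) l l = 0) → ∀ x ∈ cstarAlg n r₁,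
      Φ x k l = 0 ∧ Ψ x k l = 0 := by
    intro k l hl x hx
    have h1 : ∀ t, (∑ i, Φ (E i)) t l = 0 := by
      intro t
      rw [Matrix.sum_apply]
      refine Finset.sum_eq_zero fun i _ => ?_
      by_cases h : t = l
      · subst h; exact hl i
      · exact hdiag i h
    constructor
    · rw [show x = x * 1 from (mul_one x).symm, hΦmul x hx 1 hC1, hΦ1, mul_apply]
      exact Finset.sum_eq_zero fun t _ => by rw [h1 t, mul_zero]
    · rw [show x = x * 1 from (mul_one x).symm, hΨmul x hx 1 hC1, hΨ1, mul_apply]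
      exact Finset.sum_eq_zero fun t _ => by rw [h1 t, mul_zero]
  -- no i with Φ(E i) = F k  ⟹  row k of everything vanishes
  have hnorow : ∀ k, (¬ ∃ i, Φ (E i) = F k) → ∀ i, Φ (E i) k k = 0 := by
    intro k hno i
    rcases hPstruct i with h0 | ⟨k', hk'⟩
    · simp [h0]
    · have hkk : k' ≠ k := fun h => hno ⟨i, h ▸ hk'⟩
      rw [hk']
      simp [hF, Matrix.single, hkk]
  -- THE key corner identity
  have lemA : ∀ x ∈ cstarAlg n r₁, ∀ y ∈ cstarAlg n r₁, ∀ k l : Fin m,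
      Φ x k l * star (Φ y k l) = Ψ x k l * star (Ψ y k l) := by
    intro x hx y hy k l
    by_cases hk : ∃ i, Φ (E i) = F k
    · by_cases hl : ∃ j, Φ (E j) = F l
      · obtain ⟨i, hi⟩ := hk
        obtain ⟨j, hj⟩ := hl
        have key : ∀ (Θ : Matrix (Fin n) (Fin n) ℂ → Matrix (Fin m) (Fin m) ℂ),
            (∀ (c : ℂ), ∀ z ∈ cstarAlg n r₁, Θ (c • z) = c • Θ z) →
            (∀ z ∈ cstarAlg n r₁, ∀ w ∈ cstarAlg n r₁, Θ (z * w) = Θ z * Θ w) →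
            (∀ z ∈ cstarAlg n r₁, Θ zᴴ = (Θ z)ᴴ) →
            Θ (E i) = F k → Θ (E j) = F l →
            ∀ z ∈ cstarAlg n r₁, ∀ w ∈ cstarAlg n r₁,
              Θ z k l * star (Θ w k l) = z i j * star (w i j) := by
          intro Θ hsm hml hst hik hjl z hz w hw
          set a := E i * z * E j with ha
          set b := E i * w * E j with hb
          have haC : a ∈ cstarAlg n r₁ := hCmul (hCmul (hEC i) hz) (hEC j)
          have hbC : b ∈ cstarAlg n r₁ := hCmul (hCmul (hEC i) hw) (hEC j)
          have hΘa : Θ a = Θ z k l • Matrix.single k l 1 := by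
            rw [ha, hml _ (hCmul (hEC i) hz) _ (hEC j), hml _ (hEC i) _ hz, hik, hjl]
            exact sandwich' k l (Θ z)
          have hΘb : Θ b = Θ w k l • Matrix.single k l 1 := by
            rw [hb, hml _ (hCmul (hEC i) hw) _ (hEC j), hml _ (hEC i) _ hw, hik, hjl]
            exact sandwich' k l (Θ w)
          have hab : a * bᴴ = (z i j * star (w i j)) • E i := by
            rw [ha, hb, sandwich' i j z, sandwich' i j w, conjTranspose_smul, stdct',
              smul_mul_assoc, mul_smul_comm, single_mul_single_same, smul_smul]
            simp [hE]
          have h1 : Θ (a * bᴴ) = (z i j * star (w i j)) • F k := by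
            rw [hab, hsm _ _ (hEC i), hik]
          have h2 : Θ (a * bᴴ) = (Θ z k l * star (Θ w k l)) • F k := by
            rw [hml _ haC _ (hCstar hbC), hst _ hbC, hΘa, hΘb, conjTranspose_smul, stdct',
              smul_mul_assoc, mul_smul_comm, single_mul_single_same, smul_smul]
            simp [hF]
          have h3 := congrFun (congrFun (h1.symm.trans h2) k) k
          have hFkk : F k k k = 1 := by simp [hF, Matrix.single]
          simp only [Matrix.smul_apply, hFkk, smul_eq_mul, mul_one] at h3
          exact h3.symm
        rw [key Φ hΦsmul hΦmul hΦstar hi hj x hx y hy,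
          key Ψ hΨsmul hΨmul hΨstar ((hΨE i) ▸ hi) ((hΨE j) ▸ hj) x hx y hy]
      · push_neg at hl
        have hno : ∀ j', Φ (E j') l l = 0 := by
          intro j'
          rcases hPstruct j' with h0 | ⟨k', hk'⟩
          · simp [h0]
          · have : k' ≠ l := fun h => (hl j') (h ▸ hk')
            rw [hk']; simp [hF, Matrix.single, this]
        obtain ⟨hx0, hx1⟩ := hcol k l hno x hx
        obtain ⟨hy0, hy1⟩ := hcol k l hno y hy
        rw [hx0, hx1, zero_mul, zero_mul]
    · have hno := hnorow k hk
      obtain ⟨hx0, hx1⟩ := hrow k l hno x hx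
      obtain ⟨hy0, hy1⟩ := hrow k l hno y hy
      rw [hx0, hx1, zero_mul, zero_mul]
  -- entries of Φ and Ψ vanish together
  have hzero_iff : ∀ x ∈ cstarAlg n r₁, ∀ k l : Fin m, (Φ x k l = 0 ↔ Ψ x k l = 0) := by
    intro x hx k l
    have h1 := lemA x hx x hx k l
    constructor
    · intro h
      have h2 : Ψ x k l * star (Ψ x k l) = 0 := by rw [← h1, h, zero_mul]
      rcases mul_eq_zero.mp h2 with h3 | h3
      · exact h3
      · exact star_eq_zero.mp h3
    · intro h
      have h2 : Φ x k l * star (Φ x k l) = 0 := by rw [h1, h, zero_mul]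
      rcases mul_eq_zero.mp h2 with h3 | h3
      · exact h3
      · exact star_eq_zero.mp h3
  -- the unimodular ratio function u
  have exists_u : ∀ k l : Fin m, ∃ c : ℂ, c * star c = 1 ∧
      ∀ x ∈ cstarAlg n r₁, Ψ x k l = c * Φ x k l := by
    intro k l
    by_cases hR : ∃ x, x ∈ cstarAlg n r₁ ∧ Φ x k l ≠ 0
    · obtain ⟨x₀, hx₀, h₀⟩ := hR
      have hq' : Ψ x₀ k l ≠ 0 := fun h => h₀ ((hzero_iff x₀ hx₀ k l).mpr h)
      have hA2 := lemA x₀ hx₀ x₀ hx₀ k l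
      refine ⟨Ψ x₀ k l / Φ x₀ k l, ?_, ?_⟩
      · rw [star_div₀, div_mul_div_comm, ← hA2]
        exact div_self (mul_ne_zero h₀ (star_ne_zero.mpr h₀))
      · intro x hx
        by_cases h0 : Φ x k l = 0
        · rw [h0, mul_zero]; exact (hzero_iff x hx k l).mp h0
        · have hA1 := lemA x hx x₀ hx₀ k l
          have hstar : star (Φ x₀ k l) ≠ 0 := star_ne_zero.mpr h₀
          have e1 : Ψ x k l * Φ x₀ k l * star (Φ x₀ k l)
              = Φ x k l * Ψ x₀ k l * star (Φ x₀ k l) := by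
            calc Ψ x k l * Φ x₀ k l * star (Φ x₀ k l)
                = (Φ x₀ k l * star (Φ x₀ k l)) * Ψ x k l := by ring
              _ = (Ψ x₀ k l * star (Ψ x₀ k l)) * Ψ x k l := by rw [hA2]
              _ = (Ψ x k l * star (Ψ x₀ k l)) * Ψ x₀ k l := by ring
              _ = (Φ x k l * star (Φ x₀ k l)) * Ψ x₀ k l := by rw [hA1]
              _ = Φ x k l * Ψ x₀ k l * star (Φ x₀ k l) := by ring
          have e2 : Ψ x k l * Φ x₀ k l = Φ x k l * Ψ x₀ k l := mul_right_cancel₀ hstar e1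
          field_simp
          linear_combination e2
    · refine ⟨1, by simp, fun x hx => ?_⟩
      have h1 : Φ x k l = 0 := by
        by_contra h; exact hR ⟨x, hx, h⟩
      rw [h1, mul_zero]; exact (hzero_iff x hx k l).mp h1
  choose u huunit humul using exists_u
  -- the connectivity relation and its properties
  have hRsymm : ∀ k l : Fin m, (∃ x, x ∈ cstarAlg n r₁ ∧ Φ x k l ≠ 0) →
      (∃ x, x ∈ cstarAlg n r₁ ∧ Φ x l k ≠ 0) := by
    rintro k l ⟨x, hx, hne⟩
    refine ⟨xᴴ, hCstar hx, ?_⟩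
    rw [hΦstar x hx, conjTranspose_apply]
    exact star_ne_zero.mpr hne
  have hRcol : ∀ k l : Fin m, (∃ x, x ∈ cstarAlg n r₁ ∧ Φ x k l ≠ 0) →
      ∃ j, Φ (E j) = F l := by
    rintro k l ⟨x, hx, hne⟩
    by_contra hno
    push_neg at hno
    have hall : ∀ j, Φ (E j) l l = 0 := by
      intro j
      rcases hPstruct j with h0 | ⟨k', hk'⟩
      · simp [h0]
      · have : k' ≠ l := fun h => (hno j) (h ▸ hk')
        rw [hk']; simp [hF, Matrix.single, this]
    exact hne (hcol k l hall x hx).1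
  have hcoc : ∀ k l l' : Fin m, (∃ x, x ∈ cstarAlg n r₁ ∧ Φ x k l ≠ 0) →
      (∃ y, y ∈ cstarAlg n r₁ ∧ Φ y l l' ≠ 0) →
      (∃ z, z ∈ cstarAlg n r₁ ∧ Φ z k l' ≠ 0) ∧ u k l' = u k l * u l l' := by
    intro k l l' h1 h2
    obtain ⟨j, hj⟩ := hRcol k l h1
    obtain ⟨x, hx, hxne⟩ := h1
    obtain ⟨y, hy, hyne⟩ := h2
    set z := x * (E j * y) with hz
    have hzC : z ∈ cstarAlg n r₁ := hCmul hx (hCmul (hEC j) hy)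
    have entry : ∀ (Θ : Matrix (Fin n) (Fin n) ℂ → Matrix (Fin m) (Fin m) ℂ),
        (∀ w ∈ cstarAlg n r₁, ∀ v ∈ cstarAlg n r₁, Θ (w * v) = Θ w * Θ v) →
        Θ (E j) = F l → Θ z k l' = Θ x k l * Θ y l l' := by
      intro Θ hml hjl
      rw [hz, hml _ hx _ (hCmul (hEC j) hy), hml _ (hEC j) _ hy, hjl]
      rw [mul_apply, Finset.sum_eq_single l]
      · rw [hF]; simp
      · intro t _ htl
        have : (Matrix.single l l (1:ℂ) * Θ y) t l' = 0 :=
          Matrix.single_mul_apply_of_ne (1:ℂ) l l t l' htl (Θ y)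
        rw [this, mul_zero]
      · intro h; exact absurd (Finset.mem_univ l) h
    have hzΦ : Φ z k l' = Φ x k l * Φ y l l' := entry Φ hΦmul hj
    have hzΨ : Ψ z k l' = Ψ x k l * Ψ y l l' := entry Ψ hΨmul ((hΨE j) ▸ hj)
    have hzne : Φ z k l' ≠ 0 := hzΦ ▸ mul_ne_zero hxne hyne
    refine ⟨⟨z, hzC, hzne⟩, ?_⟩
    have e1 : u k l' * Φ z k l' = (u k l * u l l') * Φ z k l' := by
      rw [← humul k l' z hzC, hzΨ, humul k l x hx, humul l l' y hy, hzΦ]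
      ring
    exact mul_right_cancel₀ hzne e1
  -- construction of the diagonal unitary
  set cls : Fin m → Finset (Fin m) :=
    fun k => insert k (Finset.univ.filter (fun t => ∃ x, x ∈ cstarAlg n r₁ ∧ Φ x t k ≠ 0))
    with hcls
  have hclsne : ∀ k, (cls k).Nonempty := fun k => ⟨k, Finset.mem_insert_self _ _⟩
  set base : Fin m → Fin m := fun k => (cls k).min' (hclsne k) with hbase
  set v : Fin m → ℂ := fun k => u (base k) k with hv
  refine ⟨Matrix.diagonal v, isDiag_diagonal v, ?_, ?_⟩
  · intro k
    rw [diagonal_apply_eq]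
    exact habs' _ (huunit (base k) k)
  · intro x hx
    ext k l
    have hentry : (Matrix.diagonal v)ᴴ * Φ x * Matrix.diagonal v = fun k l => star (v k) * Φ x k l * v l := by
      rw [diagonal_conjTranspose]
      ext a b
      simp [diagonal_mul, mul_diagonal, Pi.star_apply]
    rw [hentry]
    show Ψ x k l = star (v k) * Φ x k l * v l
    by_cases h0 : Φ x k l = 0
    · rw [h0, mul_zero, zero_mul]
      exact (hzero_iff x hx k l).mp h0
    · have hRkl : ∃ w, w ∈ cstarAlg n r₁ ∧ Φ w k l ≠ 0 := ⟨x, hx, h0⟩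
      have hRlk := hRsymm k l hRkl
      have hRkk := (hcoc k l k hRkl hRlk).1
      have hRll := (hcoc l k l hRlk hRkl).1
      -- classes coincide
      have hclseq : cls k = cls l := by
        have hmem : ∀ t s s', (∃ w, w ∈ cstarAlg n r₁ ∧ Φ w s s' ≠ 0) →
            (∃ w, w ∈ cstarAlg n r₁ ∧ Φ w s' s ≠ 0) →
            (t ∈ cls s ↔ (∃ w, w ∈ cstarAlg n r₁ ∧ Φ w t s ≠ 0)) := by
          intro t s s' hss' hs's
          rw [hcls]
          simp only [Finset.mem_insert, Finset.mem_filter, Finset.mem_univ, true_and]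
          constructor
          · rintro (rfl | h)
            · exact (hcoc t s' t hss' hs's).1
            · exact h
          · intro h; exact Or.inr h
        rw [Finset.ext_iff]
        intro t
        rw [hmem t k l hRkl hRlk, hmem t l k hRlk hRkl]
        constructor
        · intro h; exact (hcoc t k l h hRkl).1
        · intro h; exact (hcoc t l k h hRlk).1
      have hbkl : base k = base l := by
        apply le_antisymm
        · exact Finset.min'_le _ _ (hclseq ▸ Finset.min'_mem (cls l) (hclsne l))
        · exact Finset.min'_le _ _ (hclseq.symm ▸ Finset.min'_mem (cls k) (hclsne k))
      have hbmem : ∀ s s', (∃ w, w ∈ cstarAlg n r₁ ∧ Φ w s s' ≠ 0) →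
          (∃ w, w ∈ cstarAlg n r₁ ∧ Φ w s' s ≠ 0) →
          (∃ w, w ∈ cstarAlg n r₁ ∧ Φ w (base s) s ≠ 0) := by
        intro s s' hss' hs's
        have hclsmem : ∀ t s : Fin m,
            t ∈ cls s ↔ (t = s ∨ ∃ x, x ∈ cstarAlg n r₁ ∧ Φ x t s ≠ 0) := by
          intro t s
          rw [hcls]
          simp [Finset.mem_insert, Finset.mem_filter]
        have hmm : base s ∈ cls s := Finset.min'_mem (cls s) (hclsne s)
        rcases (hclsmem (base s) s).mp hmm with h | h
        · rw [h]; exact (hcoc s s' s hss' hs's).1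
        · exact h
      have hRbk : ∃ w, w ∈ cstarAlg n r₁ ∧ Φ w (base k) k ≠ 0 := hbmem k l hRkl hRlk
      -- the cocycle computation
      have hub : u (base k) l = u (base k) k * u k l := (hcoc (base k) k l hRbk hRkl).2
      have hvk : v k = u (base k) k := rfl
      have hvl : v l = u (base k) l := by
        rw [show v l = u (base l) l from rfl, ← hbkl]
      calc Ψ x k l = u k l * Φ x k l := humul k l x hx
        _ = star (u (base k) k) * Φ x k l * (u (base k) k * u k l) := by
            have h1 : star (u (base k) k) * u (base k) k = 1 := by
              rw [mul_comm]; exact huunit (base k) k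
            calc u k l * Φ x k l
                = (star (u (base k) k) * u (base k) k) * (u k l * Φ x k l) := by
                  rw [h1, one_mul]
              _ = star (u (base k) k) * Φ x k l * (u (base k) k * u k l) := by ring
        _ = star (v k) * Φ x k l * v l := by rw [hvk, hvl, hub]

end
end

section
/- Let v ∈ Matrix (Fin n) (Fin n) ℂ be a partial isometry, i.e. v · vᴴ · v = v. Then v normalises the diagonal masa — meaning vᴴ · d · v and v · d · vᴴ are diagonal matrices for every diagonal matrix d — if and only if every entry of v is either 0 or of modulus 1 and v has at most one nonzero entry in each row and at most one nonzero entry in each column; equivalently, if and only if v = c · w where c is a diagonal unitary and w is a matrix with entries in {0,1} having at most one 1 in each row and in each column. -/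
open Matrix

noncomputable section

section Aux
variable {n : ℕ}

private lemma eA (v : Matrix (Fin n) (Fin n) ℂ) (f : Fin n → ℂ) (a b : Fin n) :
    (vᴴ * Matrix.diagonal f * v) a b = ∑ k, star (v k a) * f k * v k b := by
  rw [mul_assoc]
  simp [Matrix.mul_apply, Matrix.diagonal_apply, ite_mul, mul_ite, Finset.sum_ite_eq,
    Finset.sum_ite_eq', mul_assoc]

private lemma eB (v : Matrix (Fin n) (Fin n) ℂ) (f : Fin n → ℂ) (a b : Fin n) :
    (v * Matrix.diagonal f * vᴴ) a b = ∑ k, v a k * f k * star (v b k) := by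
  rw [mul_assoc]
  simp [Matrix.mul_apply, Matrix.diagonal_apply, ite_mul, mul_ite, Finset.sum_ite_eq,
    Finset.sum_ite_eq', mul_assoc]

/-- The entrywise condition. -/
private def Ecnd (v : Matrix (Fin n) (Fin n) ℂ) : Prop :=
  (∀ i j, v i j = 0 ∨ ‖v i j‖ = 1) ∧
  (∀ i j₁ j₂, v i j₁ ≠ 0 → v i j₂ ≠ 0 → j₁ = j₂) ∧
  (∀ i₁ i₂ j, v i₁ j ≠ 0 → v i₂ j ≠ 0 → i₁ = i₂)

private lemma P_to_E (v : Matrix (Fin n) (Fin n) ℂ) (hv : v * vᴴ * v = v)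
    (hP : ∀ d : Matrix (Fin n) (Fin n) ℂ, d.IsDiag → (vᴴ * d * v).IsDiag ∧ (v * d * vᴴ).IsDiag) :
    Ecnd v := by
  have hrow : ∀ i j₁ j₂, v i j₁ ≠ 0 → v i j₂ ≠ 0 → j₁ = j₂ := by
    intro i j₁ j₂ h1 h2
    by_contra hne
    have hd := (hP (Matrix.diagonal (fun k => if k = i then 1 else 0))
      (Matrix.isDiag_diagonal _)).1 hne
    have hd : (vᴴ * Matrix.diagonal (fun k => if k = i then (1:ℂ) else 0) * v) j₁ j₂ = 0 := hd
    rw [eA] at hd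
    simp only [mul_ite, mul_zero, ite_mul, zero_mul, mul_one, Finset.sum_ite_eq', Finset.mem_univ, if_true] at hd
    exact h2 (by
      have := mul_eq_zero.mp hd
      rcases this with h | h
      · exact absurd (star_eq_zero.mp h) h1
      · exact h)
  have hcol : ∀ i₁ i₂ j, v i₁ j ≠ 0 → v i₂ j ≠ 0 → i₁ = i₂ := by
    intro i₁ i₂ j h1 h2
    by_contra hne
    have hd := (hP (Matrix.diagonal (fun k => if k = j then 1 else 0))
      (Matrix.isDiag_diagonal _)).2 hne
    have hd : (v * Matrix.diagonal (fun k => if k = j then (1:ℂ) else 0) * vᴴ) i₁ i₂ = 0 := hd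
    rw [eB] at hd
    simp only [mul_ite, mul_zero, ite_mul, zero_mul, mul_one, Finset.sum_ite_eq', Finset.mem_univ, if_true] at hd
    rcases mul_eq_zero.mp hd with h | h
    · exact h1 h
    · exact h2 (star_eq_zero.mp h)
  refine ⟨?_, hrow, hcol⟩
  intro i j
  by_cases h0 : v i j = 0
  · exact Or.inl h0
  · right
    have key : v i j * (star (v i j) * v i j) = v i j := by
      conv_rhs => rw [← hv]
      rw [mul_assoc, Matrix.mul_apply]
      rw [Finset.sum_eq_single j]
      · congr 1
        rw [Matrix.mul_apply, Finset.sum_eq_single i]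
        · simp [Matrix.conjTranspose_apply]
        · intro l _ hl
          by_cases hz : v l j = 0
          · simp [hz]
          · exact absurd (hcol l i j hz h0) hl
        · simp
      · intro k _ hk
        by_cases hz : v i k = 0
        · simp [hz]
        · exact absurd (hrow i k j hz h0) hk
      · simp
    have h1 : star (v i j) * v i j = 1 :=
      mul_left_cancel₀ h0 (key.trans (mul_one (v i j)).symm)
    have : ‖v i j‖ * ‖v i j‖ = 1 := by
      have := congrArg (fun z : ℂ => ‖z‖) h1
      simp only [norm_mul, norm_star, norm_one] at this
      exact this
    rcases mul_self_eq_one_iff.mp this with h | h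
    · exact h
    · exfalso; have := norm_nonneg (v i j); linarith

private lemma E_to_P (v : Matrix (Fin n) (Fin n) ℂ)
    (hrow : ∀ i j₁ j₂, v i j₁ ≠ 0 → v i j₂ ≠ 0 → j₁ = j₂)
    (hcol : ∀ i₁ i₂ j, v i₁ j ≠ 0 → v i₂ j ≠ 0 → i₁ = i₂) :
    ∀ d : Matrix (Fin n) (Fin n) ℂ, d.IsDiag → (vᴴ * d * v).IsDiag ∧ (v * d * vᴴ).IsDiag := by
  intro d hd
  have hdeq : d = Matrix.diagonal (fun k => d k k) := by
    ext a b
    by_cases h : a = b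
    · subst h; simp
    · simp [Matrix.diagonal_apply, h, hd h]
  constructor
  · intro a b hab
    rw [hdeq, eA]
    apply Finset.sum_eq_zero
    intro k _
    by_cases h1 : v k a = 0
    · simp [h1]
    by_cases h2 : v k b = 0
    · simp [h2]
    exact absurd (hrow k a b h1 h2) hab
  · intro a b hab
    rw [hdeq, eB]
    apply Finset.sum_eq_zero
    intro k _
    by_cases h1 : v a k = 0
    · simp [h1]
    by_cases h2 : v b k = 0
    · simp [h2]
    exact absurd (hcol a b k h1 h2) hab

private lemma E_to_D (v : Matrix (Fin n) (Fin n) ℂ) (hE : Ecnd v) :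
    ∃ c w : Matrix (Fin n) (Fin n) ℂ, c.IsDiag ∧ (∀ i, ‖c i i‖ = 1) ∧
      (∀ i j, w i j = 0 ∨ w i j = 1) ∧
      (∀ i j₁ j₂, w i j₁ ≠ 0 → w i j₂ ≠ 0 → j₁ = j₂) ∧
      (∀ i₁ i₂ j, w i₁ j ≠ 0 → w i₂ j ≠ 0 → i₁ = i₂) ∧
      v = c * w := by
  obtain ⟨huni, hrow, hcol⟩ := hE
  refine ⟨Matrix.diagonal (fun i => if h : ∃ j, v i j ≠ 0 then v i h.choose else 1),
    Matrix.of (fun i j => if v i j ≠ 0 then 1 else 0),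
    Matrix.isDiag_diagonal _, ?_, ?_, ?_, ?_, ?_⟩
  · intro i
    simp only [Matrix.diagonal_apply_eq]
    by_cases h : ∃ j, v i j ≠ 0
    · rw [dif_pos h]
      rcases huni i h.choose with h0 | h1
      · exact absurd h0 h.choose_spec
      · exact h1
    · rw [dif_neg h]; simp
  · intro i j
    by_cases h : v i j = 0 <;> simp [h]
  · intro i j₁ j₂ h1 h2
    simp only [Matrix.of_apply, ne_eq, ite_eq_right_iff] at h1 h2
    refine hrow i j₁ j₂ ?_ ?_ <;> [skip; skip] <;>
      · intro h; simp [h] at h1 h2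
  · intro i₁ i₂ j h1 h2
    simp only [Matrix.of_apply, ne_eq, ite_eq_right_iff] at h1 h2
    refine hcol i₁ i₂ j ?_ ?_ <;> [skip; skip] <;>
      · intro h; simp [h] at h1 h2
  · ext i j
    rw [Matrix.diagonal_mul, Matrix.of_apply]
    by_cases h0 : v i j = 0
    · simp [h0]
    · have hex : ∃ j', v i j' ≠ 0 := ⟨j, h0⟩
      rw [if_pos h0, dif_pos hex, mul_one]
      exact (congrArg (v i) (hrow i hex.choose j hex.choose_spec h0)).symm

private lemma D_to_E (v : Matrix (Fin n) (Fin n) ℂ)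
    (h : ∃ c w : Matrix (Fin n) (Fin n) ℂ, c.IsDiag ∧ (∀ i, ‖c i i‖ = 1) ∧
      (∀ i j, w i j = 0 ∨ w i j = 1) ∧
      (∀ i j₁ j₂, w i j₁ ≠ 0 → w i j₂ ≠ 0 → j₁ = j₂) ∧
      (∀ i₁ i₂ j, w i₁ j ≠ 0 → w i₂ j ≠ 0 → i₁ = i₂) ∧
      v = c * w) : Ecnd v := by
  obtain ⟨c, w, hcd, hcu, hw01, hwr, hwc, hvv⟩ := h
  have hvij : ∀ i j, v i j = c i i * w i j := by
    intro i j
    rw [hvv, Matrix.mul_apply, Finset.sum_eq_single i]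
    · intro k _ hk
      rw [hcd (Ne.symm hk), zero_mul]
    · simp
  refine ⟨?_, ?_, ?_⟩
  · intro i j
    rw [hvij]
    rcases hw01 i j with h | h
    · simp [h]
    · right; simp [h, hcu i]
  · intro i j₁ j₂ h1 h2
    rw [hvij] at h1 h2
    exact hwr i j₁ j₂ (fun h => h1 (by simp [h])) (fun h => h2 (by simp [h]))
  · intro i₁ i₂ j h1 h2
    rw [hvij] at h1 h2
    exact hwc i₁ i₂ j (fun h => h1 (by simp [h])) (fun h => h2 (by simp [h]))

end Aux

/-- A partial isometry `v` normalises the diagonal masa of `Mₙ(ℂ)` iff its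
entries are `0` or unimodular with at most one nonzero entry in each row and column;
equivalently, iff `v = c · w` with `c` a diagonal unitary and `w` a `0–1` matrix with at most
one `1` in each row and column. -/
theorem partialIsometry_normalises_diagonal_iff (n : ℕ)
    (v : Matrix (Fin n) (Fin n) ℂ) (hv : v * vᴴ * v = v) :
    ((∀ d : Matrix (Fin n) (Fin n) ℂ, d.IsDiag → (vᴴ * d * v).IsDiag ∧ (v * d * vᴴ).IsDiag) ↔
      ((∀ i j, v i j = 0 ∨ ‖v i j‖ = 1) ∧
       (∀ i j₁ j₂, v i j₁ ≠ 0 → v i j₂ ≠ 0 → j₁ = j₂) ∧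
       (∀ i₁ i₂ j, v i₁ j ≠ 0 → v i₂ j ≠ 0 → i₁ = i₂))) ∧
    ((∀ d : Matrix (Fin n) (Fin n) ℂ, d.IsDiag → (vᴴ * d * v).IsDiag ∧ (v * d * vᴴ).IsDiag) ↔
      (∃ c w : Matrix (Fin n) (Fin n) ℂ, c.IsDiag ∧ (∀ i, ‖c i i‖ = 1) ∧
        (∀ i j, w i j = 0 ∨ w i j = 1) ∧
        (∀ i j₁ j₂, w i j₁ ≠ 0 → w i j₂ ≠ 0 → j₁ = j₂) ∧
        (∀ i₁ i₂ j, w i₁ j ≠ 0 → w i₂ j ≠ 0 → i₁ = i₂) ∧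
        v = c * w)) := by
  have h1 : (∀ d : Matrix (Fin n) (Fin n) ℂ, d.IsDiag →
      (vᴴ * d * v).IsDiag ∧ (v * d * vᴴ).IsDiag) ↔ Ecnd v :=
    ⟨P_to_E v hv, fun hE => E_to_P v hE.2.1 hE.2.2⟩
  exact ⟨h1, h1.trans ⟨E_to_D v, D_to_E v⟩⟩

end
end
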